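/- Let $a>0$, $b>0$, $c\in\mathbb{R}$, and $p>4$. Define $h:(0,\infty)\to\mathbb{R}$ by $h(t)=\frac{1}{2}a t^{2}+c - \frac{\alpha\rho^{2}}{4}\log t - \frac{b}{p} t^{p-2}$ where $\alpha<0$ and $\rho>0$. Then there exists a unique $t_{*}>0$ such that $h'(t_{*})=0$; moreover $t_{*}$ is a strict global maximum point of $h$, $h'(t)>0$ for $0<t<t_{*}$, and $h'(t)<0$ for $t>t_{*}$. -/

import Mathlib

open Real Set Filter

theorem stmt0 (a b c α ρ p : ℝ) (ha : 0 < a) (hb : 0 < b) (hp : 4 < p)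
    (hα : α < 0) (hρ : 0 < ρ) (h : ℝ → ℝ)
    (hdef : ∀ t : ℝ, 0 < t →
      h t = (1/2) * a * t ^ 2 + c - α * ρ ^ 2 / 4 * Real.log t - b / p * t ^ (p - 2)) :
    ∃ tstar : ℝ, 0 < tstar ∧ deriv h tstar = 0 ∧
      (∀ t, 0 < t → deriv h t = 0 → t = tstar) ∧
      (∀ t, 0 < t → t ≠ tstar → h t < h tstar) ∧
      (∀ t, 0 < t → t < tstar → 0 < deriv h t) ∧
      (∀ t, tstar < t → deriv h t < 0) := by
  have hp0 : (0:ℝ) < p := by linarith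
  set K : ℝ := -(α * ρ ^ 2 / 4) with hKdef
  set M : ℝ := b * (p - 2) / p with hMdef
  clear_value K
  have hK : 0 < K := by
    have : α * ρ ^ 2 < 0 := mul_neg_of_neg_of_pos hα (by positivity)
    simp only [hKdef]; linarith
  clear_value M
  have hM : 0 < M := by rw [hMdef]; exact div_pos (mul_pos hb (by linarith)) hp0
  set ψ : ℝ → ℝ := fun t => a + K * ((t ^ 2)⁻¹) - M * t ^ (p - 4) with hψdef
  clear_value ψ
  -- derivative of h
  have hH : ∀ t : ℝ, 0 < t → HasDerivAt h (t * ψ t) t := by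
    intro t ht
    have hf : HasDerivAt (fun x : ℝ => (1/2) * a * x ^ 2 + c - α * ρ ^ 2 / 4 * Real.log x
        - b / p * x ^ (p - 2))
        ((1/2) * a * (2 * t ^ 1) - α * ρ ^ 2 / 4 * t⁻¹ - b / p * ((p - 2) * t ^ (p - 2 - 1))) t := by
      have h1 : HasDerivAt (fun x : ℝ => (1/2) * a * x ^ 2) ((1/2) * a * (2 * t ^ 1)) t := by
        simpa using (hasDerivAt_pow 2 t).const_mul ((1/2) * a)
      have h2 : HasDerivAt Real.log t⁻¹ t := Real.hasDerivAt_log ht.ne'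
      have h3 : HasDerivAt (fun x : ℝ => x ^ (p - 2)) ((p - 2) * t ^ (p - 2 - 1)) t :=
        Real.hasDerivAt_rpow_const (Or.inl ht.ne')
      exact ((h1.add_const c).sub (h2.const_mul (α * ρ ^ 2 / 4))).sub
        (h3.const_mul (b / p))
    have hval : (1/2) * a * (2 * t ^ 1) - α * ρ ^ 2 / 4 * t⁻¹ - b / p * ((p - 2) * t ^ (p - 2 - 1))
        = t * ψ t := by
      have e2 : t * (t ^ 2)⁻¹ = t⁻¹ := by
        field_simp
      have e3 : t * t ^ (p - (4:ℝ)) = t ^ (p - 3) := by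
        rw [show p - 3 = 1 + (p - 4) by ring, Real.rpow_add ht, Real.rpow_one]
      have e4 : t ^ (p - 2 - 1) = t ^ (p - 3) := by rw [show p - 2 - 1 = p - 3 by ring]
      have e5 : t⁻¹ = t * (t ^ 2)⁻¹ := e2.symm
      simp only [hψdef, hKdef, hMdef]
      rw [e4, ← e3, e5]
      have ht2 : (t:ℝ) ^ 2 ≠ 0 := pow_ne_zero 2 ht.ne'
      field_simp
      ring
    rw [← hval]
    refine hf.congr_of_eventuallyEq ?_
    filter_upwards [Ioi_mem_nhds ht] with x hx
    exact hdef x hx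
  have hderiv : ∀ t : ℝ, 0 < t → deriv h t = t * ψ t := fun t ht => (hH t ht).deriv
  -- strict antitonicity of ψ
  have hanti : ∀ s t : ℝ, 0 < s → s < t → ψ t < ψ s := by
    intro s t hs hst
    have ht : 0 < t := hs.trans hst
    have i1 : (t ^ 2)⁻¹ < (s ^ 2)⁻¹ := by
      apply inv_strictAnti₀ (pow_pos hs 2)
      exact pow_lt_pow_left₀ hst hs.le (by norm_num)
    have i2 : s ^ (p - 4) < t ^ (p - 4) := Real.rpow_lt_rpow hs.le hst (by linarith)
    have j1 := mul_lt_mul_of_pos_left i1 hK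
    have j2 := mul_lt_mul_of_pos_left i2 hM
    simp only [hψdef]
    linarith
  -- a point where ψ is positive
  obtain ⟨s, hs0, hψs⟩ : ∃ s : ℝ, 0 < s ∧ 0 < ψ s := by
    have hKM : (0:ℝ) < K / (2 * M) := by positivity
    refine ⟨min 1 (Real.sqrt (K / (2 * M))), lt_min one_pos (Real.sqrt_pos.2 hKM), ?_⟩
    set s := min 1 (Real.sqrt (K / (2 * M))) with hsdef
    have hs0 : 0 < s := lt_min one_pos (Real.sqrt_pos.2 hKM)
    have hs1 : s ≤ 1 := min_le_left _ _
    have hsr : s ≤ Real.sqrt (K / (2 * M)) := min_le_right _ _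
    clear_value s
    have hsq : s ^ 2 ≤ K / (2 * M) := by
      calc s ^ 2 ≤ Real.sqrt (K / (2 * M)) ^ 2 :=
            pow_le_pow_left₀ hs0.le hsr 2
        _ = K / (2 * M) := Real.sq_sqrt hKM.le
    have hMs : M * s ^ 2 ≤ K := by
      have h1 : M * s ^ 2 ≤ M * (K / (2 * M)) := mul_le_mul_of_nonneg_left hsq hM.le
      have h2 : M * (K / (2 * M)) = K / 2 := by field_simp
      linarith
    have hb1 : M ≤ K * (s ^ 2)⁻¹ := by
      rw [← div_eq_mul_inv]
      exact (le_div_iff₀ (pow_pos hs0 2)).2 hMs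
    have hb2 : M * s ^ (p - 4) ≤ M := by
      have : s ^ (p - 4) ≤ 1 := Real.rpow_le_one hs0.le hs1 (by linarith)
      nlinarith
    simp only [hψdef]
    linarith
  -- a point where ψ is negative
  obtain ⟨T, hT0, hψT⟩ : ∃ T : ℝ, 0 < T ∧ ψ T < 0 := by
    set X : ℝ := (a + K) / M + 1 with hXdef
    clear_value X
    have hX1 : 1 ≤ X := by
      have : 0 ≤ (a + K) / M := by positivity
      linarith
    have hX0 : 0 < X := by linarith
    have hpinv : (0:ℝ) ≤ (p - 4)⁻¹ := inv_nonneg.2 (by linarith)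
    refine ⟨X ^ (p - 4)⁻¹, Real.rpow_pos_of_pos hX0 _, ?_⟩
    set T := X ^ (p - 4)⁻¹ with hTdef
    have hT1 : 1 ≤ T := Real.one_le_rpow hX1 hpinv
    clear_value T
    have hT0 : 0 < T := lt_of_lt_of_le one_pos hT1
    have hTp : T ^ (p - 4) = X := by
      rw [hTdef, ← Real.rpow_mul hX0.le, inv_mul_cancel₀ (ne_of_gt (by linarith : (0:ℝ) < p - 4)),
        Real.rpow_one]
    have hinv : (T ^ 2)⁻¹ ≤ 1 := by
      rw [inv_le_one_iff₀]
      right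
      nlinarith
    have hMX : a + K < M * X := by
      have : M * X = (a + K) + M := by rw [hXdef]; field_simp
      rw [this]; linarith
    have hKT : K * (T ^ 2)⁻¹ ≤ K := by nlinarith
    simp only [hψdef]
    rw [hTp]
    linarith
  have hsT : s < T := by
    by_contra hc
    push_neg at hc
    rcases eq_or_lt_of_le hc with hc | hc
    · rw [hc] at hψT; linarith
    · have := hanti T s hT0 hc; linarith
  -- IVT gives the critical point
  have hcont : ContinuousOn ψ (Icc s T) := by
    rw [hψdef]
    intro x hx
    have hx0 : 0 < x := lt_of_lt_of_le hs0 hx.1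
    apply ContinuousWithinAt.sub
    · apply ContinuousWithinAt.add continuousWithinAt_const
      apply ContinuousAt.continuousWithinAt
      exact (((continuous_pow 2).continuousAt).inv₀ (pow_ne_zero 2 hx0.ne')).const_smul K
    · apply ContinuousAt.continuousWithinAt
      exact (Real.continuousAt_rpow_const x _ (Or.inl hx0.ne')).const_smul M
  obtain ⟨tstar, htmem, htψ⟩ : ∃ t ∈ Icc s T, ψ t = 0 := by
    have h0 : (0:ℝ) ∈ Icc (ψ T) (ψ s) := ⟨hψT.le, hψs.le⟩
    obtain ⟨t, ht, htv⟩ := intermediate_value_Icc' hsT.le hcont h0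
    exact ⟨t, ht, htv⟩
  have htstar0 : 0 < tstar := lt_of_lt_of_le hs0 htmem.1
  -- sign facts
  have hpos : ∀ t, 0 < t → t < tstar → 0 < deriv h t := by
    intro t ht htt
    rw [hderiv t ht]
    have h1 : ψ tstar < ψ t := hanti t tstar ht htt
    rw [htψ] at h1
    exact mul_pos ht h1
  have hneg : ∀ t, tstar < t → deriv h t < 0 := by
    intro t htt
    have ht : 0 < t := htstar0.trans htt
    rw [hderiv t ht]
    have h1 : ψ t < ψ tstar := hanti tstar t htstar0 htt
    rw [htψ] at h1
    exact mul_neg_of_pos_of_neg ht h1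
  have huniq : ∀ t, 0 < t → deriv h t = 0 → t = tstar := by
    intro t ht hdt
    rcases lt_trichotomy t tstar with hc | hc | hc
    · exact absurd hdt (ne_of_gt (hpos t ht hc))
    · exact hc
    · exact absurd hdt (ne_of_lt (hneg t hc))
  have hconth : ∀ x : ℝ, 0 < x → ContinuousAt h x := fun x hx =>
    (hH x hx).differentiableAt.continuousAt
  -- strict max
  have hmax : ∀ t, 0 < t → t ≠ tstar → h t < h tstar := by
    intro t ht hne
    rcases lt_or_gt_of_ne hne with hc | hc
    · have hmono : StrictMonoOn h (Ioc 0 tstar) := by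
        apply strictMonoOn_of_deriv_pos (convex_Ioc 0 tstar)
        · exact fun x hx => (hconth x hx.1).continuousWithinAt
        · intro x hx
          rw [interior_Ioc] at hx
          exact hpos x hx.1 hx.2
      exact hmono ⟨ht, hc.le⟩ ⟨htstar0, le_refl _⟩ hc
    · have hanti' : StrictAntiOn h (Ici tstar) := by
        apply strictAntiOn_of_deriv_neg (convex_Ici tstar)
        · exact fun x hx => (hconth x (lt_of_lt_of_le htstar0 hx)).continuousWithinAt
        · intro x hx
          rw [interior_Ici] at hx
          exact hneg x hx
      exact hanti' (le_refl tstar) hc.le hc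
  refine ⟨tstar, htstar0, ?_, huniq, hmax, hpos, hneg⟩
  rw [hderiv tstar htstar0, htψ, mul_zero]
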